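/- Lower bound for the cyclic contiguous hitting number: if H ⊆ Z_N intersects every set that is the union of two disjoint cyclic intervals of length T (N ≥ 2T), then |H| ≥ ⌈N/T⌉ - 1. -/

import Mathlib

/-- The cyclic interval `{j, j+1, ..., j+T-1}` (mod `N`). -/
def cycInt (N T : ℕ) (j : ZMod N) : Finset (ZMod N) :=
  (Finset.range T).image (fun t : ℕ => j + (t : ZMod N))

lemma mem_cycInt {N T : ℕ} {j x : ZMod N} :
    x ∈ cycInt N T j ↔ ∃ t, t < T ∧ j + (t : ZMod N) = x := by
  simp [cycInt, Finset.mem_image, Finset.mem_range]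

lemma cycInt_disjoint {N T : ℕ} (j : ZMod N) (a b : ℕ) (hab : a + T ≤ b) (hbN : b + T ≤ N)
    (hT : 0 < T) :
    Disjoint (cycInt N T (j + (a : ZMod N))) (cycInt N T (j + (b : ZMod N))) := by
  haveI : NeZero N := ⟨by omega⟩
  rw [Finset.disjoint_left]
  intro x hx hx'
  obtain ⟨t, ht, hxt⟩ := mem_cycInt.mp hx
  obtain ⟨s, hs, hxs⟩ := mem_cycInt.mp hx'
  have heq : ((a + t : ℕ) : ZMod N) = ((b + s : ℕ) : ZMod N) := by
    have : j + ((a + t : ℕ) : ZMod N) = j + ((b + s : ℕ) : ZMod N) := by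
      push_cast
      rw [← add_assoc, ← add_assoc, hxt, hxs]
    exact add_left_cancel this
  have h1 : a + t < N := by omega
  have h2 : b + s < N := by omega
  have := congrArg ZMod.val heq
  rw [ZMod.val_natCast_of_lt h1, ZMod.val_natCast_of_lt h2] at this
  omega

lemma key_card (N T k : ℕ) (hT : 0 < T) (hN : 0 < N) (j : ZMod N) (o : ℕ → ℕ)
    (hmono : ∀ i l, i < l → l < k → o i + T ≤ o l)
    (hbound : ∀ i, i < k → o i + T ≤ N)
    (H : Finset (ZMod N))
    (hne : ∀ i, i < k → ((cycInt N T (j + (o i : ZMod N))) ∩ H).Nonempty) :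
    k ≤ H.card := by
  classical
  have hch : ∀ i, i < k → ∃ x, x ∈ cycInt N T (j + (o i : ZMod N)) ∧ x ∈ H := by
    intro i hi
    obtain ⟨x, hx⟩ := hne i hi
    exact ⟨x, Finset.mem_inter.mp hx⟩
  choose! f hf1 hf2 using hch
  have hcard := Finset.card_le_card_of_injOn f
    (fun i hi => hf2 i (Finset.mem_range.mp hi)) ?_
  · simpa using hcard
  · intro i hi l hl hfe
    simp only [Finset.coe_range, Set.mem_Iio] at hi hl
    have hpair : ∀ i l, i < l → l < k → f i ≠ f l := by
      intro i l hlt hlk heq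
      have hd := cycInt_disjoint j (o i) (o l) (hmono i l hlt hlk) (hbound l hlk) hT
      exact Finset.disjoint_left.mp hd (hf1 i (hlt.trans hlk)) (heq ▸ hf1 l hlk)
    rcases lt_trichotomy i l with h | h | h
    · exact absurd hfe (hpair i l h hl)
    · exact h
    · exact absurd hfe.symm (hpair l i h hi)

/-- Lower bound for the cyclic contiguous hitting number: if `H ⊆ Z_N` intersects every
set that is the union of two disjoint cyclic intervals of length `T` (with `N ≥ 2T`),
then `|H| ≥ ⌈N/T⌉ - 1`. -/
theorem cyclic_contiguous_hitting_lower_bound (N T : ℕ) (hT : 1 ≤ T) (hN : 2 * T ≤ N)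
    (H : Finset (ZMod N))
    (hhit : ∀ j k : ZMod N, Disjoint (cycInt N T j) (cycInt N T k) →
      ((cycInt N T j ∪ cycInt N T k) ∩ H).Nonempty) :
    ⌈(N : ℚ) / (T : ℚ)⌉₊ - 1 ≤ H.card := by
  classical
  have hN0 : 0 < N := by omega
  haveI : NeZero N := ⟨by omega⟩
  set m := ⌈(N : ℚ) / (T : ℚ)⌉₊ with hm
  set k := m - 1 with hk
  -- key numeric fact : k * T < N
  have hT0 : (0:ℚ) < (T:ℚ) := by exact_mod_cast hT
  have hml : (m : ℚ) < (N:ℚ)/(T:ℚ) + 1 := Nat.ceil_lt_add_one (by positivity)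
  have hmq : (m : ℚ) * T < (N:ℚ) + T := by
    calc (m:ℚ) * T < ((N:ℚ)/(T:ℚ) + 1) * T := by
          exact mul_lt_mul_of_pos_right hml hT0
      _ = (N:ℚ) + T := by field_simp
  have hmn : m * T < N + T := by exact_mod_cast hmq
  have hkT : k * T < N := by
    rcases Nat.eq_zero_or_pos m with h0 | h1
    · simp [hk, h0]; omega
    · have : m = k + 1 := by omega
      rw [this, add_mul, one_mul] at hmn
      omega
  show k ≤ H.card
  by_cases hall : ∀ j : ZMod N, ((cycInt N T j) ∩ H).Nonempty
  · refine key_card N T k (by omega) hN0 0 (fun i => i * T) ?_ ?_ H ?_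
    · intro i l hil hlk
      have : (i + 1) * T ≤ l * T := Nat.mul_le_mul_right T (by omega)
      rw [add_mul, one_mul] at this; omega
    · intro i hi
      have : (i + 1) * T ≤ k * T := Nat.mul_le_mul_right T (by omega)
      rw [add_mul, one_mul] at this; omega
    · intro i hi
      have := hall ((i * T : ℕ) : ZMod N)
      rwa [show (0:ZMod N) + ((i*T : ℕ) : ZMod N) = ((i*T : ℕ) : ZMod N) from zero_add _]
  · push_neg at hall
    obtain ⟨j, hj⟩ := hall
    have hjmt : ∀ s, s < T → j + (s : ZMod N) ∉ H := by
      intro s hs hsH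
      have : j + (s : ZMod N) ∈ cycInt N T j ∩ H :=
        Finset.mem_inter.mpr ⟨mem_cycInt.mpr ⟨s, hs, rfl⟩, hsH⟩
      simp [hj] at this
    rcases H.eq_empty_or_nonempty with hHe | ⟨x₀, hx₀⟩
    · exfalso
      have hd := cycInt_disjoint (N := N) (T := T) (0 : ZMod N) 0 T (by omega) (by omega) (by omega)
      have := hhit ((0:ZMod N) + ((0:ℕ) : ZMod N)) ((0:ZMod N) + ((T:ℕ) : ZMod N)) hd
      rw [hHe] at this
      simp at this
    · -- anchor : slide to find first element of H after the empty interval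
      have hex : ∃ t : ℕ, j + (T : ZMod N) + (t : ZMod N) ∈ H := by
        refine ⟨(x₀ - (j + (T : ZMod N))).val, ?_⟩
        rw [ZMod.natCast_rightInverse _]
        simpa using hx₀
      let t₀ := Nat.find hex
      have ha : j + (T : ZMod N) + (t₀ : ZMod N) ∈ H := Nat.find_spec hex
      have hmin : ∀ t, t < t₀ → j + (T : ZMod N) + (t : ZMod N) ∉ H :=
        fun t ht => Nat.find_min hex ht
      set j' := j + (t₀ : ZMod N) with hj'
      set a := j + (T : ZMod N) + (t₀ : ZMod N) with hadef
      have hB0 : ∀ s, s < T → j' + (s : ZMod N) ∉ H := by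
        intro s hs
        rcases Nat.lt_or_ge (t₀ + s) T with hc | hc
        · have : j' + (s : ZMod N) = j + ((t₀ + s : ℕ) : ZMod N) := by
            rw [hj']; push_cast; ring
          rw [this]
          exact hjmt (t₀ + s) hc
        · have heq : j' + (s : ZMod N) = j + (T : ZMod N) + ((t₀ + s - T : ℕ) : ZMod N) := by
            rw [hj']
            have : ((t₀ : ℕ) : ZMod N) + (s : ZMod N) = (T : ZMod N) + ((t₀ + s - T : ℕ) : ZMod N) := by
              have h1 : t₀ + s = T + (t₀ + s - T) := by omega
              calc ((t₀ : ℕ) : ZMod N) + (s : ZMod N) = ((t₀ + s : ℕ) : ZMod N) := by push_cast; ring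
                _ = ((T + (t₀ + s - T) : ℕ) : ZMod N) := by rw [← h1]
                _ = (T : ZMod N) + ((t₀ + s - T : ℕ) : ZMod N) := by push_cast; ring
            rw [add_assoc, this, ← add_assoc]
          rw [heq]
          exact hmin (t₀ + s - T) (by omega)
      have hB0' : ∀ x, x ∈ cycInt N T j' → x ∉ H := by
        intro x hx hxH
        obtain ⟨s, hs, rfl⟩ := mem_cycInt.mp hx
        exact hB0 s hs hxH
      refine key_card N T k (by omega) hN0 j' (fun i => i * T + 1) ?_ ?_ H ?_
      · intro i l hil hlk
        have : (i + 1) * T ≤ l * T := Nat.mul_le_mul_right T (by omega)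
        rw [add_mul, one_mul] at this; omega
      · intro i hi
        have : (i + 1) * T ≤ k * T := Nat.mul_le_mul_right T (by omega)
        rw [add_mul, one_mul] at this; omega
      · intro i hi
        rcases Nat.eq_zero_or_pos i with h0 | h1
        · -- the anchor a lies in this interval
          subst h0
          refine ⟨a, Finset.mem_inter.mpr ⟨mem_cycInt.mpr ⟨T - 1, by omega, ?_⟩, ha⟩⟩
          rw [hadef, hj']
          have : ((0 * T + 1 : ℕ) : ZMod N) + ((T - 1 : ℕ) : ZMod N) = ((T : ℕ) : ZMod N) := by
            calc ((0 * T + 1 : ℕ) : ZMod N) + ((T - 1 : ℕ) : ZMod N)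
                = ((0 * T + 1 + (T - 1) : ℕ) : ZMod N) := by push_cast; ring
              _ = ((T : ℕ) : ZMod N) := by congr 1; omega
          rw [add_assoc, this]; ring
        · -- use the hitting hypothesis with the empty interval
          have hTle : T ≤ i * T := le_mul_of_one_le_left (Nat.zero_le T) h1
          have hup : (i + 1) * T ≤ k * T := Nat.mul_le_mul_right T (by omega)
          rw [add_mul, one_mul] at hup
          have hd := cycInt_disjoint (N := N) (T := T) j' 0 (i * T + 1) (by omega) (by omega) (by omega)
          rw [show j' + ((0:ℕ) : ZMod N) = j' by simp] at hd
          obtain ⟨x, hx⟩ := hhit j' (j' + ((i * T + 1 : ℕ) : ZMod N)) hd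
          rw [Finset.mem_inter, Finset.mem_union] at hx
          rcases hx with ⟨hx1 | hx1, hx2⟩
          · exact absurd hx2 (hB0' x hx1)
          · exact ⟨x, Finset.mem_inter.mpr ⟨hx1, hx2⟩⟩
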